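/- arXiv:1404.3250 — 2 statements merged into one kernel-verified Lean document; each statement's English description precedes it below -/
import Mathlib

section
/- Let B ∈ {0,1}^{n×k} and let A be obtained from B by changing a single entry from 1 to 0. Then the number of full-rank matrices in S(A,q) is at most (1/q) times the number of full-rank matrices in S(B,q). -/
/-- The support set S(B,q): matrices over F vanishing wherever the binary
pattern B is zero (false). -/
def patternSupport (F : Type*) [Field F] {n k : ℕ} (B : Matrix (Fin n) (Fin k) Bool) :
    Set (Matrix (Fin n) (Fin k) F) :=
  {M | ∀ i j, B i j = false → M i j = 0}

/-- The number of full-rank matrices respecting the zero pattern P. -/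
noncomputable def numFullRank (F : Type*) [Field F] [Fintype F] {n k : ℕ}
    (P : Matrix (Fin n) (Fin k) Bool) : ℕ :=
  Nat.card {M : Matrix (Fin n) (Fin k) F // M ∈ patternSupport F P ∧ M.rank = min n k}

set_option linter.unusedSectionVars false

open Matrix Finset Submodule Module

attribute [local instance] Classical.propDecidable

section aux
variable {F : Type*} [Field F] [Fintype F] {k : ℕ}

/-- submodule of vectors vanishing where b is false -/
def boolSub (F : Type*) [Field F] {k : ℕ} (b : Fin k → Bool) : Submodule F (Fin k → F) where
  carrier := {u | ∀ j, b j = false → u j = 0}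
  add_mem' := fun {x y} hx hy j hj => by simp [hx j hj, hy j hj]
  zero_mem' := fun j _ => rfl
  smul_mem' := fun c u hu j hj => by simp [hu j hj]

lemma mem_boolSub {b : Fin k → Bool} {u : Fin k → F} :
    u ∈ boolSub F b ↔ ∀ j, b j = false → u j = 0 := Iff.rfl

lemma fiber_le (U : Submodule F (Fin k → F)) (φ : (Fin k → F) →ₗ[F] F) (c : F) :
    (univ.filter fun u => u ∈ U ∧ φ u = c).card
      ≤ (univ.filter fun u => u ∈ U ∧ φ u = 0).card := by
  rcases (univ.filter fun u => u ∈ U ∧ φ u = c).eq_empty_or_nonempty with h | ⟨u₀, hu₀⟩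
  · simp [h]
  · simp only [mem_filter, mem_univ, true_and] at hu₀
    apply Finset.card_le_card_of_injOn (fun x => x - u₀)
    · intro x hx
      simp only [Finset.mem_coe, mem_filter, mem_univ, true_and] at hx ⊢
      exact ⟨U.sub_mem hx.1 hu₀.1, by simp [hx.2, hu₀.2]⟩
    · intro a _ b _ h
      simpa using congrArg (· + u₀) h

lemma fiber_eq (V : Submodule F (Fin k → F)) (φ : (Fin k → F) →ₗ[F] F)
    (e : Fin k → F) (he : e ∈ V) (hφe : φ e = 1) (c : F) :
    (univ.filter fun u => u ∈ V ∧ φ u = c).card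
      = (univ.filter fun u => u ∈ V ∧ φ u = 0).card := by
  refine le_antisymm (fiber_le V φ c) ?_
  apply Finset.card_le_card_of_injOn (fun x => x + c • e)
  · intro x hx
    simp only [Finset.mem_coe, mem_filter, mem_univ, true_and] at hx ⊢
    exact ⟨V.add_mem hx.1 (V.smul_mem c he), by simp [hx.2, hφe]⟩
  · intro a _ b _ h
    simpa using congrArg (· - c • e) h

lemma card_filter_le (U : Submodule F (Fin k → F)) (φ : (Fin k → F) →ₗ[F] F) :
    (univ.filter fun u => u ∈ U).card
      ≤ Fintype.card F * (univ.filter fun u => u ∈ U ∧ φ u = 0).card := by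
  rw [Finset.card_eq_sum_card_fiberwise (f := fun u => φ u) (t := univ)
    (fun x _ => mem_univ _)]
  simp only [Finset.filter_filter]
  calc ∑ c ∈ univ, (univ.filter fun u => u ∈ U ∧ φ u = c).card
      ≤ ∑ _c ∈ (univ : Finset F), (univ.filter fun u => u ∈ U ∧ φ u = 0).card :=
        Finset.sum_le_sum fun c _ => fiber_le U φ c
    _ = _ := by rw [Finset.sum_const, Finset.card_univ, smul_eq_mul]

lemma card_filter_eq (V : Submodule F (Fin k → F)) (φ : (Fin k → F) →ₗ[F] F)
    (e : Fin k → F) (he : e ∈ V) (hφe : φ e = 1) :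
    (univ.filter fun u => u ∈ V).card
      = Fintype.card F * (univ.filter fun u => u ∈ V ∧ φ u = 0).card := by
  rw [Finset.card_eq_sum_card_fiberwise (f := fun u => φ u) (t := univ)
    (fun x _ => mem_univ _)]
  simp only [Finset.filter_filter]
  calc ∑ c ∈ univ, (univ.filter fun u => u ∈ V ∧ φ u = c).card
      = ∑ _c ∈ (univ : Finset F), (univ.filter fun u => u ∈ V ∧ φ u = 0).card :=
        Finset.sum_congr rfl fun c _ => fiber_eq V φ e he hφe c
    _ = _ := by rw [Finset.sum_const, Finset.card_univ, smul_eq_mul]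

lemma core (V W : Submodule F (Fin k → F)) (φ : (Fin k → F) →ₗ[F] F)
    (e : Fin k → F) (he : e ∈ V) (hφe : φ e = 1) :
    Fintype.card F * (univ.filter fun u => (u ∈ V ∧ φ u = 0) ∧ u ∉ W).card
      ≤ (univ.filter fun u => u ∈ V ∧ u ∉ W).card := by
  have h1 : (univ.filter fun u => (u ∈ V ∧ φ u = 0) ∧ u ∈ W).card
      + (univ.filter fun u => (u ∈ V ∧ φ u = 0) ∧ u ∉ W).card
      = (univ.filter fun u => u ∈ V ∧ φ u = 0).card := by
    have := Finset.card_filter_add_card_filter_not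
      (s := univ.filter fun u : Fin k → F => u ∈ V ∧ φ u = 0) (p := fun u => u ∈ W)
    rwa [Finset.filter_filter, Finset.filter_filter] at this
  have h2 : (univ.filter fun u => u ∈ V ∧ u ∈ W).card
      + (univ.filter fun u => u ∈ V ∧ u ∉ W).card
      = (univ.filter fun u => u ∈ V).card := by
    have := Finset.card_filter_add_card_filter_not
      (s := univ.filter fun u : Fin k → F => u ∈ V) (p := fun u => u ∈ W)
    rwa [Finset.filter_filter, Finset.filter_filter] at this
  have h3 := card_filter_eq V φ e he hφe
  have h4 : (univ.filter fun u => u ∈ V ∧ u ∈ W).card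
      ≤ Fintype.card F * (univ.filter fun u => (u ∈ V ∧ φ u = 0) ∧ u ∈ W).card := by
    have := card_filter_le (V ⊓ W) φ
    have e1 : (univ.filter fun u => u ∈ V ⊓ W) = univ.filter fun u => u ∈ V ∧ u ∈ W := by
      apply Finset.filter_congr; intro x _; simp [Submodule.mem_inf]
    have e2 : (univ.filter fun u => u ∈ V ⊓ W ∧ φ u = 0)
        = univ.filter fun u => (u ∈ V ∧ φ u = 0) ∧ u ∈ W := by
      apply Finset.filter_congr; intro x _; simp [Submodule.mem_inf]; tauto
    rw [e1, e2] at this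
    exact this
  have h5 : Fintype.card F * (univ.filter fun u => (u ∈ V ∧ φ u = 0) ∧ u ∈ W).card
      + Fintype.card F * (univ.filter fun u => (u ∈ V ∧ φ u = 0) ∧ u ∉ W).card
      = Fintype.card F * (univ.filter fun u => u ∈ V ∧ φ u = 0).card := by
    rw [← Nat.mul_add, h1]
  omega

end aux

section rank
variable {F : Type*} [Field F] {n k : ℕ}

lemma my_updateRow_updateRow (R : Matrix (Fin n) (Fin k) F) (i₀ : Fin n) (u v : Fin k → F) :
    updateRow (updateRow R i₀ u) i₀ v = updateRow R i₀ v := by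
  ext i j
  by_cases h : i = i₀
  · subst h; simp [Matrix.updateRow_self]
  · simp [Matrix.updateRow_ne h]

lemma range_updateRow (R : Matrix (Fin n) (Fin k) F) (i₀ : Fin n) (u : Fin k → F) :
    Set.range (updateRow R i₀ u) = (R '' {i | i ≠ i₀}) ∪ {u} := by
  ext v
  constructor
  · rintro ⟨i, rfl⟩
    by_cases h : i = i₀
    · subst h; right; simp [Matrix.updateRow_self]
    · exact Or.inl ⟨i, h, (Matrix.updateRow_ne h).symm⟩
  · rintro (⟨i, hi, rfl⟩ | rfl)
    · exact ⟨i, Matrix.updateRow_ne hi⟩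
    · exact ⟨i₀, Matrix.updateRow_self⟩

lemma rank_updateRow (R : Matrix (Fin n) (Fin k) F) (i₀ : Fin n) (u : Fin k → F) :
    (updateRow R i₀ u).rank
      = finrank F ↥(span F (R '' {i | i ≠ i₀}) ⊔ span F {u}) := by
  rw [Matrix.rank_eq_finrank_span_row]
  exact congrArg (fun s : Submodule F (Fin k → F) => finrank F ↥s)
    ((congrArg (span F) (range_updateRow R i₀ u)).trans (Submodule.span_union _ _))

lemma sup_span_mem (W : Submodule F (Fin k → F)) {u : Fin k → F} (hu : u ∈ W) :
    W ⊔ span F {u} = W :=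
  sup_eq_left.mpr ((Submodule.span_singleton_le_iff_mem u W).mpr hu)

lemma finrank_sup_span_notmem (W : Submodule F (Fin k → F)) {u : Fin k → F} (hu : u ∉ W) :
    finrank F ↥(W ⊔ span F {u}) = finrank F ↥W + 1 := by
  have hu0 : u ≠ 0 := fun h => hu (h ▸ W.zero_mem)
  have hinf : W ⊓ span F {u} = ⊥ := by
    rw [eq_bot_iff]
    rintro x hx
    rw [Submodule.mem_inf] at hx
    obtain ⟨c, rfl⟩ := Submodule.mem_span_singleton.mp hx.2
    rcases eq_or_ne c 0 with rfl | hc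
    · simp
    · exact absurd (by simpa [smul_smul, inv_mul_cancel₀ hc] using W.smul_mem c⁻¹ hx.1) hu
  have h := Submodule.finrank_sup_add_finrank_inf_eq W (span F {u})
  rw [hinf, finrank_bot, finrank_span_singleton hu0] at h
  omega

lemma finrank_rows_le (R : Matrix (Fin n) (Fin k) F) (i₀ : Fin n) :
    finrank F ↥(span F (R '' {i | i ≠ i₀})) ≤ n - 1 := by
  classical
  have h1 : Set.finrank F (R '' {i | i ≠ i₀}) ≤ Fintype.card {i : Fin n // i ≠ i₀} := by
    have e := Set.image_eq_range R {i | i ≠ i₀}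
    rw [e]
    exact finrank_range_le_card _
  have h2 : Fintype.card {i : Fin n // i ≠ i₀} = n - 1 := by
    simp [Fintype.card_subtype_compl]
  rw [h2] at h1
  exact h1

end rank
set_option linter.unusedSectionVars false

section fiber
variable {F : Type*} [Field F] [Fintype F] {n k : ℕ}

lemma fiber_empty (P : Matrix (Fin n) (Fin k) Bool) (i₀ : Fin n)
    (R : Matrix (Fin n) (Fin k) F) (hR : updateRow R i₀ (0 : Fin k → F) ≠ R) :
    ((univ : Finset (Matrix (Fin n) (Fin k) F)).filter fun M =>
        ((∀ i j, P i j = false → M i j = 0) ∧ M.rank = min n k)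
          ∧ updateRow M i₀ 0 = R) = ∅ := by
  rw [Finset.filter_eq_empty_iff]
  rintro M - ⟨-, h2⟩
  exact hR (by rw [← h2, my_updateRow_updateRow])

lemma fiber_card (P : Matrix (Fin n) (Fin k) Bool) (i₀ : Fin n)
    (R : Matrix (Fin n) (Fin k) F) (hR : updateRow R i₀ (0 : Fin k → F) = R) :
    ((univ : Finset (Matrix (Fin n) (Fin k) F)).filter fun M =>
        ((∀ i j, P i j = false → M i j = 0) ∧ M.rank = min n k)
          ∧ updateRow M i₀ 0 = R).card
    = ((univ : Finset (Fin k → F)).filter fun u =>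
        (∀ i j, P i j = false → updateRow R i₀ u i j = 0)
          ∧ (updateRow R i₀ u).rank = min n k).card := by
  symm
  apply Finset.card_bij (fun u _ => updateRow R i₀ u)
  · intro u hu
    simp only [mem_filter, mem_univ, true_and] at hu ⊢
    exact ⟨⟨hu.1, hu.2⟩, by rw [my_updateRow_updateRow, hR]⟩
  · intro a ha b hb h
    simpa [Matrix.updateRow_self] using congrFun h i₀
  · intro M hM
    simp only [mem_filter, mem_univ, true_and] at hM
    have hMR : updateRow R i₀ (M i₀) = M := by
      rw [← hM.2, my_updateRow_updateRow, Matrix.updateRow_eq_self]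
    refine ⟨M i₀, ?_, hMR⟩
    simp only [mem_filter, mem_univ, true_and, hMR]
    exact hM.1

end fiber

section main
variable {F : Type*} [Field F] [Fintype F] {n k : ℕ}

lemma fiber_ineq (A B : Matrix (Fin n) (Fin k) Bool) (i₀ : Fin n) (j₀ : Fin k)
    (hB : B i₀ j₀ = true) (hA : A i₀ j₀ = false)
    (hAB : ∀ i j, (i, j) ≠ (i₀, j₀) → A i j = B i j)
    (R : Matrix (Fin n) (Fin k) F) :
    Fintype.card F * ((univ : Finset (Matrix (Fin n) (Fin k) F)).filter fun M =>
        ((∀ i j, A i j = false → M i j = 0) ∧ M.rank = min n k)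
          ∧ updateRow M i₀ 0 = R).card
      ≤ ((univ : Finset (Matrix (Fin n) (Fin k) F)).filter fun M =>
        ((∀ i j, B i j = false → M i j = 0) ∧ M.rank = min n k)
          ∧ updateRow M i₀ 0 = R).card := by
  by_cases hR : updateRow R i₀ (0 : Fin k → F) = R
  swap
  · rw [fiber_empty A i₀ R hR, fiber_empty B i₀ R hR]; simp
  rw [fiber_card A i₀ R hR, fiber_card B i₀ R hR]
  by_cases hrest : ∀ i j, i ≠ i₀ → B i j = false → R i j = 0
  swap
  · push_neg at hrest
    obtain ⟨i, j, hi, hij, hRij⟩ := hrest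
    have hempty : ∀ P : Matrix (Fin n) (Fin k) Bool, P i j = false →
        ((univ : Finset (Fin k → F)).filter fun u =>
          (∀ i' j', P i' j' = false → updateRow R i₀ u i' j' = 0)
            ∧ (updateRow R i₀ u).rank = min n k) = ∅ := by
      intro P hP
      rw [Finset.filter_eq_empty_iff]
      rintro u - ⟨h1, -⟩
      have := h1 i j hP
      rw [Matrix.updateRow_ne hi] at this
      exact hRij this
    have hAij : A i j = false := by
      rw [hAB i j (by simp only [ne_eq, Prod.mk.injEq, not_and]; tauto)]; exact hij
    rw [hempty A hAij, hempty B hij]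
    simp
  · set V : Submodule F (Fin k → F) := boolSub F (B i₀) with hV
    set W : Submodule F (Fin k → F) := span F (R '' {i | i ≠ i₀}) with hW
    set φ : (Fin k → F) →ₗ[F] F := LinearMap.proj j₀ with hφ
    have hφu : ∀ u : Fin k → F, φ u = u j₀ := fun u => rfl
    set e : Fin k → F := Pi.single j₀ (1 : F) with he'
    have he : e ∈ V := by
      intro j hj
      rcases eq_or_ne j j₀ with rfl | hjj
      · rw [hj] at hB; exact absurd hB (by simp)
      · simp [he', Pi.single_eq_of_ne hjj]
    have hφe : φ e = 1 := by simp [hφu, he', Pi.single_eq_same]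
    have pB : ∀ u : Fin k → F,
        (∀ i j, B i j = false → updateRow R i₀ u i j = 0) ↔ u ∈ V := by
      intro u
      constructor
      · intro h j hj
        have := h i₀ j hj
        rwa [Matrix.updateRow_self] at this
      · intro h i j hj
        rcases eq_or_ne i i₀ with rfl | hi
        · rw [Matrix.updateRow_self]; exact h j hj
        · rw [Matrix.updateRow_ne hi]; exact hrest i j hi hj
    have pA : ∀ u : Fin k → F,
        (∀ i j, A i j = false → updateRow R i₀ u i j = 0) ↔ (u ∈ V ∧ φ u = 0) := by
      intro u
      constructor
      · intro h
        constructor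
        · intro j hj
          rcases eq_or_ne j j₀ with rfl | hjj
          · rw [hj] at hB; exact absurd hB (by simp)
          · have hAij : A i₀ j = false := by
              rw [hAB i₀ j (by simp only [ne_eq, Prod.mk.injEq, not_and]; tauto)]
              exact hj
            have := h i₀ j hAij
            rwa [Matrix.updateRow_self] at this
        · have := h i₀ j₀ hA
          rwa [Matrix.updateRow_self] at this
      · rintro ⟨hu, hu0⟩ i j hj
        rcases eq_or_ne i i₀ with rfl | hi
        · rw [Matrix.updateRow_self]
          rcases eq_or_ne j j₀ with rfl | hjj
          · exact hu0
          · apply hu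
            rw [← hAB i j (by simp only [ne_eq, Prod.mk.injEq, not_and]; tauto)]
            exact hj
        · rw [Matrix.updateRow_ne hi]
          apply hrest i j hi
          rw [← hAB i j (by simp only [ne_eq, Prod.mk.injEq, not_and]; tauto)]
          exact hj
    have hrank : ∀ u : Fin k → F,
        (updateRow R i₀ u).rank = finrank F ↥(W ⊔ span F {u}) :=
      fun u => rank_updateRow R i₀ u
    have hd : finrank F ↥W ≤ n - 1 := finrank_rows_le R i₀
    have hn : 0 < n := i₀.pos
    by_cases hcase1 : finrank F ↥W + 1 = min n k
    · have hrankiff : ∀ u : Fin k → F,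
          ((updateRow R i₀ u).rank = min n k) ↔ u ∉ W := by
        intro u
        rw [hrank]
        constructor
        · intro h hu
          rw [sup_span_mem W hu] at h
          omega
        · intro hu
          rw [finrank_sup_span_notmem W hu]
          exact hcase1
      have eA : ((univ : Finset (Fin k → F)).filter fun u =>
          (∀ i j, A i j = false → updateRow R i₀ u i j = 0)
            ∧ (updateRow R i₀ u).rank = min n k)
          = (univ.filter fun u => (u ∈ V ∧ φ u = 0) ∧ u ∉ W) :=
        Finset.filter_congr (fun u _ => by rw [pA u, hrankiff u])
      have eB : ((univ : Finset (Fin k → F)).filter fun u =>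
          (∀ i j, B i j = false → updateRow R i₀ u i j = 0)
            ∧ (updateRow R i₀ u).rank = min n k)
          = (univ.filter fun u => u ∈ V ∧ u ∉ W) :=
        Finset.filter_congr (fun u _ => by rw [pB u, hrankiff u])
      rw [eA, eB]
      exact core V W φ e he hφe
    · by_cases hcase2 : finrank F ↥W = min n k
      · have hrk : min n k = k := by omega
        have hWtop : W = ⊤ := by
          apply Submodule.eq_top_of_finrank_eq
          rw [Module.finrank_pi, Fintype.card_fin, hcase2, hrk]
        have hrankiff : ∀ u : Fin k → F, ((updateRow R i₀ u).rank = min n k) ↔ True := by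
          intro u
          simp only [iff_true]
          rw [hrank, hWtop, top_sup_eq, finrank_top, Module.finrank_pi, Fintype.card_fin, hrk]
        have eA : ((univ : Finset (Fin k → F)).filter fun u =>
            (∀ i j, A i j = false → updateRow R i₀ u i j = 0)
              ∧ (updateRow R i₀ u).rank = min n k)
            = (univ.filter fun u => u ∈ V ∧ φ u = 0) :=
          Finset.filter_congr (fun u _ => by rw [pA u, hrankiff u, and_true])
        have eB : ((univ : Finset (Fin k → F)).filter fun u =>
            (∀ i j, B i j = false → updateRow R i₀ u i j = 0)
              ∧ (updateRow R i₀ u).rank = min n k)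
            = (univ.filter fun u => u ∈ V) :=
          Finset.filter_congr (fun u _ => by rw [pB u, hrankiff u, and_true])
        rw [eA, eB]
        exact le_of_eq (card_filter_eq V φ e he hφe).symm
      · have hrankiff : ∀ u : Fin k → F, ¬((updateRow R i₀ u).rank = min n k) := by
          intro u h
          rw [hrank] at h
          by_cases hu : u ∈ W
          · rw [sup_span_mem W hu] at h; exact hcase2 h
          · rw [finrank_sup_span_notmem W hu] at h; exact hcase1 h
        have hemp : ∀ P : Matrix (Fin n) (Fin k) Bool,
            ((univ : Finset (Fin k → F)).filter fun u =>
              (∀ i j, P i j = false → updateRow R i₀ u i j = 0)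
                ∧ (updateRow R i₀ u).rank = min n k) = ∅ := by
          intro P
          rw [Finset.filter_eq_empty_iff]
          rintro u - ⟨-, h2⟩
          exact hrankiff u h2
        rw [hemp A, hemp B]
        simp

end main

/-- If A is obtained from B by changing a single entry from 1 to 0, then the
number of full-rank matrices in S(A,q) is at most (1/q) times the number of
full-rank matrices in S(B,q). -/
theorem stmt9 (F : Type*) [Field F] [Fintype F] (q n k : ℕ)
    (hq : Fintype.card F = q)
    (A B : Matrix (Fin n) (Fin k) Bool) (i₀ : Fin n) (j₀ : Fin k)
    (hB : B i₀ j₀ = true) (hA : A i₀ j₀ = false)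
    (hAB : ∀ i j, (i, j) ≠ (i₀, j₀) → A i j = B i j) :
    (numFullRank F A : ℚ) ≤ (numFullRank F B : ℚ) / q := by
  classical
  have hq0 : (0 : ℚ) < q := by exact_mod_cast hq ▸ Fintype.card_pos
  rw [le_div_iff₀ hq0]
  have hnum : ∀ P : Matrix (Fin n) (Fin k) Bool, numFullRank F P
      = ((univ : Finset (Matrix (Fin n) (Fin k) F)).filter fun M =>
          (∀ i j, P i j = false → M i j = 0) ∧ M.rank = min n k).card := by
    intro P
    rw [numFullRank, Nat.card_eq_fintype_card, Fintype.card_subtype]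
    exact congrArg Finset.card
      (Finset.filter_congr fun M _ => by simp [patternSupport, Set.mem_setOf_eq])
  have key : Fintype.card F * numFullRank F A ≤ numFullRank F B := by
    rw [hnum A, hnum B]
    have dA := Finset.card_eq_sum_card_fiberwise
      (s := (univ : Finset (Matrix (Fin n) (Fin k) F)).filter fun M =>
        (∀ i j, A i j = false → M i j = 0) ∧ M.rank = min n k)
      (f := fun M : Matrix (Fin n) (Fin k) F => updateRow M i₀ 0) (t := univ)
      (fun x _ => mem_univ _)
    have dB := Finset.card_eq_sum_card_fiberwise
      (s := (univ : Finset (Matrix (Fin n) (Fin k) F)).filter fun M =>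
        (∀ i j, B i j = false → M i j = 0) ∧ M.rank = min n k)
      (f := fun M : Matrix (Fin n) (Fin k) F => updateRow M i₀ 0) (t := univ)
      (fun x _ => mem_univ _)
    rw [dA, dB, Finset.mul_sum]
    refine Finset.sum_le_sum fun R _ => ?_
    simp only [Finset.filter_filter]
    exact fiber_ineq A B i₀ j₀ hB hA hAB R
  rw [← hq]
  have hcast : (numFullRank F A : ℚ) * (Fintype.card F : ℚ)
      = ((Fintype.card F * numFullRank F A : ℕ) : ℚ) := by push_cast; ring
  rw [hcast]
  exact_mod_cast key
end

section
/- Let B ∈ {0,1}^{n×k} with n ≤ k, and let M be a random matrix uniform on S(B,q) (entries zero where B is zero, remaining entries i.i.d. uniform on F_q). Then Pr(rank M = n) ≤ ∏_{i=k−n+1}^{k} (1 − q^{-i}), with equality when B is the all-ones matrix. -/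
open Finset Submodule Module

section Aux

variable {F : Type*} [Field F] [Fintype F]

attribute [local instance] Fintype.ofFinite in
/-- A sigma-type cardinality bound over `ℚ`. -/
lemma nat_card_sigma_le_q {ι : Type*} [Finite ι] (f : ι → Type*) [∀ i, Finite (f i)]
    (m : ℚ) (h : ∀ i, (Nat.card (f i) : ℚ) ≤ m) :
    (Nat.card (Σ i, f i) : ℚ) ≤ Nat.card ι * m := by
  rw [Nat.card_eq_fintype_card, Fintype.card_sigma]
  push_cast
  calc (∑ i, (Fintype.card (f i) : ℚ)) ≤ ∑ _i : ι, m := by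
        refine Finset.sum_le_sum fun i _ => ?_
        rw [← Nat.card_eq_fintype_card]
        exact h i
    _ = Nat.card ι * m := by
        rw [Finset.sum_const, Finset.card_univ, ← Nat.card_eq_fintype_card, nsmul_eq_mul]

attribute [local instance] Fintype.ofFinite in
/-- Cardinality of a submodule of `Fin k → F`. -/
lemma card_submodule {k : ℕ} (V : Submodule F (Fin k → F)) :
    Nat.card V = Fintype.card F ^ finrank F V := by
  rw [Nat.card_eq_fintype_card, card_eq_pow_finrank (K := F)]

lemma card_inter_mul_le {k : ℕ} (V W : Submodule F (Fin k → F)) :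
    Nat.card V * Nat.card W ≤ Nat.card (V ⊓ W : Submodule F (Fin k → F)) * Fintype.card F ^ k := by
  rw [card_submodule, card_submodule, card_submodule, ← pow_add, ← pow_add]
  apply Nat.pow_le_pow_right Fintype.card_pos
  have h1 : finrank F ↑(V ⊔ W) + finrank F ↑(V ⊓ W) = finrank F V + finrank F W :=
    Submodule.finrank_sup_add_finrank_inf_eq V W
  have h2 : finrank F ↑(V ⊔ W) ≤ finrank F (Fin k → F) := Submodule.finrank_le _
  have h3 : finrank F (Fin k → F) = k := Module.finrank_fin_fun F
  omega

lemma card_inter_le_left {k : ℕ} (V W : Submodule F (Fin k → F)) :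
    Nat.card (V ⊓ W : Submodule F (Fin k → F)) ≤ Nat.card V := by
  rw [card_submodule, card_submodule]
  exact Nat.pow_le_pow_right Fintype.card_pos
    (Submodule.finrank_mono inf_le_left)

/-- Cardinality of the elements of `V` outside `W`. -/
lemma card_diff_eq {k : ℕ} (V W : Submodule F (Fin k → F)) :
    Nat.card {x : Fin k → F // x ∈ V ∧ x ∉ W} =
      Nat.card V - Nat.card (V ⊓ W : Submodule F (Fin k → F)) := by
  have h1 : Nat.card {x : Fin k → F // x ∈ V ∧ x ∉ W} =
      ((V : Set (Fin k → F)) \ (W : Set (Fin k → F))).ncard := by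
    rw [← Nat.card_coe_set_eq]
    rfl
  rw [h1, ← Set.diff_self_inter,
    Set.ncard_diff Set.inter_subset_left (Set.toFinite _)]
  have h2 : ((V : Set (Fin k → F)) ∩ (W : Set (Fin k → F))) =
      ((V ⊓ W : Submodule F (Fin k → F)) : Set (Fin k → F)) := rfl
  rw [h2, ← Nat.card_coe_set_eq, ← Nat.card_coe_set_eq]
  rfl

/-- The key single-row estimate. -/
lemma card_fiber_le {k n : ℕ} (hnk : n ≤ k) (V W : Submodule F (Fin k → F))
    (hW : finrank F W = n) :
    (Nat.card {x : Fin k → F // x ∈ V ∧ x ∉ W} : ℚ) ≤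
      (Nat.card V : ℚ) * (1 - (Fintype.card F : ℚ) ^ n / (Fintype.card F : ℚ) ^ k) := by
  set q : ℕ := Fintype.card F with hq
  have hq1 : 1 ≤ q := Fintype.card_pos
  have hqQ : (0 : ℚ) < (q : ℚ) ^ k := by positivity
  rw [card_diff_eq, Nat.cast_sub (card_inter_le_left V W)]
  have hWcard : Nat.card W = q ^ n := by rw [card_submodule, hW]
  have hkey : (Nat.card V : ℚ) * (q : ℚ) ^ n ≤
      (Nat.card (V ⊓ W : Submodule F (Fin k → F)) : ℚ) * (q : ℚ) ^ k := by
    have := card_inter_mul_le V W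
    rw [hWcard] at this
    exact_mod_cast this
  rw [mul_sub, mul_one]
  have : (Nat.card V : ℚ) * ((q : ℚ) ^ n / (q : ℚ) ^ k) ≤
      (Nat.card (V ⊓ W : Submodule F (Fin k → F)) : ℚ) := by
    rw [mul_div_assoc', div_le_iff₀ hqQ] at *
    linarith
  linarith

set_option maxHeartbeats 1000000 in
/-- Main inequality: counting tuples of independent vectors with row constraints. -/
lemma count_indep_le {k : ℕ} :
    ∀ (n : ℕ), n ≤ k → ∀ (V : Fin n → Submodule F (Fin k → F)),
    (Nat.card {v : Fin n → (Fin k → F) // (∀ i, v i ∈ V i) ∧ LinearIndependent F v} : ℚ) ≤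
      (∏ i, (Nat.card (V i) : ℚ)) *
        ∏ i ∈ range n, (1 - (Fintype.card F : ℚ) ^ i / (Fintype.card F : ℚ) ^ k) := by
  intro n
  induction n with
  | zero =>
    intro _ V
    have h1 : Nat.card {v : Fin 0 → (Fin k → F) // (∀ i, v i ∈ V i) ∧ LinearIndependent F v} = 1 := by
      rw [Nat.card_eq_one_iff_unique]
      refine ⟨⟨fun a b => ?_⟩, ⟨⟨finZeroElim, fun i => i.elim0, linearIndependent_empty_type⟩⟩⟩
      ext i; exact i.elim0
    rw [h1]
    simp
  | succ n ih =>
    intro hnk V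
    set q : ℕ := Fintype.card F with hqdef
    have hq1 : 1 ≤ q := Fintype.card_pos
    have hn : n ≤ k := Nat.le_of_succ_le hnk
    -- the equivalence splitting off the last row
    have e : {v : Fin (n+1) → (Fin k → F) // (∀ i, v i ∈ V i) ∧ LinearIndependent F v} ≃
        Σ p : {v : Fin n → (Fin k → F) //
            (∀ i, v i ∈ V i.castSucc) ∧ LinearIndependent F v},
          {x : Fin k → F // x ∈ V (Fin.last n) ∧ x ∉ span F (Set.range p.1)} := by
      refine ⟨fun v => ⟨⟨Fin.init v.1, fun i => ?_, (linearIndependent_fin_succ'.mp v.2.2).1⟩,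
        ⟨v.1 (Fin.last n), v.2.1 (Fin.last n), (linearIndependent_fin_succ'.mp v.2.2).2⟩⟩,
        fun p => ⟨Fin.snoc p.1.1 p.2.1, fun i => ?_,
          linearIndependent_fin_snoc.mpr ⟨p.1.2.2, p.2.2.2⟩⟩, fun v => ?_, fun p => ?_⟩
      · exact v.2.1 i.castSucc
      · refine Fin.lastCases ?_ (fun j => ?_) i
        · simpa using p.2.2.1
        · simpa using p.1.2.1 j
      · ext i
        simp [Fin.snoc_init_self]
      · ext i
        · simp
        · simp
    rw [Nat.card_congr e]
    have hbound : ∀ p : {v : Fin n → (Fin k → F) //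
        (∀ i, v i ∈ V i.castSucc) ∧ LinearIndependent F v},
        (Nat.card {x : Fin k → F // x ∈ V (Fin.last n) ∧ x ∉ span F (Set.range p.1)} : ℚ) ≤
        (Nat.card (V (Fin.last n)) : ℚ) * (1 - (q : ℚ) ^ n / (q : ℚ) ^ k) := by
      intro p
      exact card_fiber_le hn (V (Fin.last n)) (span F (Set.range p.1))
        (by rw [finrank_span_eq_card p.2.2, Fintype.card_fin])
    have b1 := nat_card_sigma_le_q _ _ hbound
    have hfactor_nonneg : (0 : ℚ) ≤
        (Nat.card (V (Fin.last n)) : ℚ) * (1 - (q : ℚ) ^ n / (q : ℚ) ^ k) := by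
      apply mul_nonneg (by positivity)
      have hle : (q : ℚ) ^ n ≤ (q : ℚ) ^ k :=
        pow_le_pow_right₀ (by exact_mod_cast hq1) hn
      have hqk : (0 : ℚ) < (q : ℚ) ^ k := by positivity
      rw [sub_nonneg, div_le_one hqk]
      exact hle
    have hT := ih hn fun i => V i.castSucc
    have b2 := mul_le_mul_of_nonneg_right hT hfactor_nonneg
    have b3 : (∏ i, (Nat.card (V i) : ℚ)) *
          ∏ i ∈ range (n+1), (1 - (q : ℚ) ^ i / (q : ℚ) ^ k) =
        ((∏ i : Fin n, (Nat.card (V i.castSucc) : ℚ)) *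
          ∏ i ∈ range n, (1 - (q : ℚ) ^ i / (q : ℚ) ^ k)) *
        ((Nat.card (V (Fin.last n)) : ℚ) * (1 - (q : ℚ) ^ n / (q : ℚ) ^ k)) := by
      rw [Fin.prod_univ_castSucc (f := fun i => (Nat.card (V i) : ℚ)),
        Finset.prod_range_succ]
      ring
    rw [b3]
    exact le_trans b1 b2

/-- Reindexing the product. -/
lemma prod_reindex (q n k : ℕ) (hq : 1 ≤ q) (hnk : n ≤ k) :
    (∏ i ∈ range n, (1 - (q : ℚ) ^ i / (q : ℚ) ^ k)) =
      ∏ i ∈ Finset.Icc (k - n + 1) k, (1 - 1 / (q : ℚ) ^ i) := by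
  have hq0 : (q : ℚ) ≠ 0 := by positivity
  refine Finset.prod_nbij' (fun i => k - i) (fun i => k - i) ?_ ?_ ?_ ?_ ?_
  · intro a ha
    simp only [Finset.mem_range] at ha
    simp only [Finset.mem_Icc]
    omega
  · intro a ha
    simp only [Finset.mem_Icc] at ha
    simp only [Finset.mem_range]
    omega
  · intro a ha
    simp only [Finset.mem_range] at ha
    show k - (k - a) = a
    omega
  · intro a ha
    simp only [Finset.mem_Icc] at ha
    show k - (k - a) = a
    omega
  · intro a ha
    simp only [Finset.mem_range] at ha
    show (1 - (q : ℚ) ^ a / (q : ℚ) ^ k) = (1 - 1 / (q : ℚ) ^ (k - a))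
    congr 1
    rw [div_eq_div_iff (by positivity) (by positivity), one_mul, ← pow_add]
    congr 1
    omega

/-- The submodule of admissible rows for row `i` of the pattern `B`. -/
def rowSubmodule {n k : ℕ} (B : Matrix (Fin n) (Fin k) Bool) (i : Fin n) :
    Submodule F (Fin k → F) where
  carrier := {v | ∀ j, B i j = false → v j = 0}
  add_mem' := fun ha hb j hj => by simp [ha j hj, hb j hj]
  zero_mem' := fun j _ => rfl
  smul_mem' := fun c v hv j hj => by simp [hv j hj]

lemma mem_rowSubmodule {n k : ℕ} (B : Matrix (Fin n) (Fin k) Bool) (i : Fin n)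
    (v : Fin k → F) : v ∈ rowSubmodule B i ↔ ∀ j, B i j = false → v j = 0 := Iff.rfl

lemma rank_eq_iff_linearIndependent {n k : ℕ} (M : Matrix (Fin n) (Fin k) F) :
    M.rank = n ↔ LinearIndependent F M := by
  constructor
  · intro h
    apply linearIndependent_iff_card_eq_finrank_span.mpr
    rw [Fintype.card_fin, Set.finrank]
    have hr := M.rank_eq_finrank_span_row
    rw [h] at hr
    exact hr
  · intro h
    rw [h.rank_matrix, Fintype.card_fin]

/-- The numerator as a count of independent constrained tuples. -/
def numerator_equiv {n k : ℕ} (B : Matrix (Fin n) (Fin k) Bool) :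
    {M : Matrix (Fin n) (Fin k) F // M ∈ patternSupport F B ∧ M.rank = n} ≃
      {v : Fin n → (Fin k → F) // (∀ i, v i ∈ rowSubmodule (F := F) B i) ∧
        LinearIndependent F v} :=
  Equiv.subtypeEquivRight fun M => by
    constructor
    · rintro ⟨h1, h2⟩
      exact ⟨fun i j hj => h1 i j hj, (rank_eq_iff_linearIndependent M).mp h2⟩
    · rintro ⟨h1, h2⟩
      exact ⟨fun i j hj => h1 i j hj, (rank_eq_iff_linearIndependent M).mpr h2⟩

/-- The denominator as a product of row counts. -/
lemma denominator_card {n k : ℕ} (B : Matrix (Fin n) (Fin k) Bool) :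
    Nat.card (patternSupport F B) =
      ∏ i : Fin n, Nat.card (rowSubmodule (F := F) B i) := by
  have e : patternSupport F B ≃ ∀ i, (rowSubmodule (F := F) B i) :=
    ⟨fun M i => ⟨M.1 i, fun j hj => M.2 i j hj⟩,
     fun v => ⟨fun i j => (v i).1 j, fun i j hj => (v i).2 j hj⟩,
     fun M => rfl, fun v => rfl⟩
  rw [Nat.card_congr e, Nat.card_pi]

lemma rowSubmodule_card_pos {n k : ℕ} (B : Matrix (Fin n) (Fin k) Bool) (i : Fin n) :
    0 < Nat.card (rowSubmodule (F := F) B i) :=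
  Nat.card_pos

end Aux

/-- For B ∈ {0,1}^{n×k} with n ≤ k and M uniform on S(B,q),
Pr(rank M = n) ≤ ∏_{i=k−n+1}^{k} (1 − q^{-i}), with equality when B is all-ones. -/
theorem stmt13 (F : Type*) [Field F] [Fintype F] (q n k : ℕ)
    (hq : Fintype.card F = q) (hnk : n ≤ k)
    (B : Matrix (Fin n) (Fin k) Bool) :
    (Nat.card {M : Matrix (Fin n) (Fin k) F // M ∈ patternSupport F B ∧ M.rank = n} : ℚ) /
        (Nat.card (patternSupport F B) : ℚ) ≤
      ∏ i ∈ Finset.Icc (k - n + 1) k, (1 - 1 / (q : ℚ) ^ i) ∧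
    ((∀ i j, B i j = true) →
      (Nat.card {M : Matrix (Fin n) (Fin k) F // M ∈ patternSupport F B ∧ M.rank = n} : ℚ) /
          (Nat.card (patternSupport F B) : ℚ) =
        ∏ i ∈ Finset.Icc (k - n + 1) k, (1 - 1 / (q : ℚ) ^ i)) := by
  subst hq
  set q : ℕ := Fintype.card F with hqdef
  have hq1 : 1 ≤ q := Fintype.card_pos
  have hnum := Nat.card_congr (numerator_equiv (F := F) B)
  have hden := denominator_card (F := F) B
  have hD : (0 : ℚ) < (Nat.card (patternSupport F B) : ℚ) := by
    rw [hden]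
    push_cast
    exact Finset.prod_pos fun i _ => by exact_mod_cast rowSubmodule_card_pos B i
  have hprod := prod_reindex q n k hq1 hnk
  constructor
  · rw [div_le_iff₀ hD, ← hprod, hnum, hden]
    calc (Nat.card {v : Fin n → (Fin k → F) //
          (∀ i, v i ∈ rowSubmodule (F := F) B i) ∧ LinearIndependent F v} : ℚ) ≤
        (∏ i, (Nat.card (rowSubmodule (F := F) B i) : ℚ)) *
          ∏ i ∈ range n, (1 - (q : ℚ) ^ i / (q : ℚ) ^ k) :=
          count_indep_le n hnk (rowSubmodule (F := F) B)
      _ = (∏ i ∈ range n, (1 - (q : ℚ) ^ i / (q : ℚ) ^ k)) *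
          ((∏ i : Fin n, Nat.card (rowSubmodule (F := F) B i) : ℕ) : ℚ) := by
          push_cast
          ring
  · intro hB
    have htop : ∀ i, rowSubmodule (F := F) B i = ⊤ := by
      intro i
      ext v
      simp only [mem_rowSubmodule, Submodule.mem_top, iff_true]
      intro j hj
      rw [hB i j] at hj
      exact absurd hj (by simp)
    -- numerator
    have hmemtriv : ∀ v : Fin n → (Fin k → F), (∀ i, v i ∈ rowSubmodule (F := F) B i) := by
      intro v i
      rw [htop i]
      trivial
    have e2 : {v : Fin n → (Fin k → F) // (∀ i, v i ∈ rowSubmodule (F := F) B i) ∧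
        LinearIndependent F v} ≃ {v : Fin n → (Fin k → F) // LinearIndependent F v} :=
      Equiv.subtypeEquivRight fun v => by
        exact ⟨fun h => h.2, fun h => ⟨hmemtriv v, h⟩⟩
    have hfr : finrank F (Fin k → F) = k := Module.finrank_fin_fun F
    have hnum2 : Nat.card {v : Fin n → (Fin k → F) // LinearIndependent F v} =
        ∏ i : Fin n, (q ^ k - q ^ (i : ℕ)) := by
      rw [card_linearIndependent (K := F) (by rw [hfr]; exact hnk), hfr]
    have hcardtop : ∀ i : Fin n, Nat.card (rowSubmodule (F := F) B i) = q ^ k := by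
      intro i
      rw [htop i, card_submodule, finrank_top, hfr]
    have hden2 : (Nat.card (patternSupport F B) : ℚ) = ((q : ℚ) ^ k) ^ n := by
      rw [hden, Finset.prod_congr rfl fun i _ => hcardtop i, Finset.prod_const,
        Finset.card_univ, Fintype.card_fin]
      push_cast
      ring
    rw [hnum, Nat.card_congr e2, hnum2, hden2, ← hprod]
    have hcast : ((∏ i : Fin n, (q ^ k - q ^ (i : ℕ)) : ℕ) : ℚ) =
        ∏ i ∈ range n, ((q : ℚ) ^ k - (q : ℚ) ^ i) := by
      rw [← Fin.prod_univ_eq_prod_range (fun i => ((q : ℚ) ^ k - (q : ℚ) ^ i)) n]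
      push_cast [Nat.cast_sub (Nat.pow_le_pow_right hq1 (le_of_lt (Nat.lt_of_lt_of_le (Fin.is_lt _) hnk)))]
      rfl
    rw [hcast, div_eq_iff (by positivity : (((q : ℚ) ^ k) ^ n) ≠ 0)]
    rw [show (((q : ℚ) ^ k) ^ n) = ∏ _i ∈ range n, (q : ℚ) ^ k by
      rw [Finset.prod_const, Finset.card_range], ← Finset.prod_mul_distrib]
    refine Finset.prod_congr rfl fun i hi => ?_
    have hqk0 : ((q : ℚ) ^ k) ≠ 0 := by positivity
    field_simp
end
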